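/- Let X ⊆ D and suppose M|_{X×X} is symmetric, not pure, no row of M|_{X×X} contains both a 0 and a 1, and there is no length-2 derectangularising sequence among subsets of X (i.e., for all A, B ⊆ X with M|_{A×B}, M|_{A×A}, M|_{B×B} pure, the relation H^M_{A,B} is rectangular). Let X_0 be the set of rows of M|_{X×X} containing a 0 and X_1 = X \ X_0. Then every diagonal entry M_{d,d} for d ∈ X is 0 or 1 (i.e., M|_{X×X} has no * on its diagonal). -/
import Mathlib


inductive Entry | zero | one | star
deriving DecidableEq

def Rectangular {α β : Type*} (R : Set (α × β)) : Prop :=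
  ∀ i j i' j', (i, i') ∈ R → (i, j') ∈ R → (j, i') ∈ R → (j, j') ∈ R

def H {D : Type*} (M : D → D → Entry) (X Y : Set D) : Set (D × D) :=
  {p | p.1 ∈ X ∧ p.2 ∈ Y ∧ M p.1 p.2 = Entry.star}

def MatPure {D : Type*} (M : D → D → Entry) (X Y : Set D) : Prop :=
  (∀ i ∈ X, ∀ j ∈ Y, M i j ≠ Entry.zero) ∨ (∀ i ∈ X, ∀ j ∈ Y, M i j ≠ Entry.one)

theorem no_star_on_diagonal {D : Type} [Fintype D] (M : D → D → Entry) (X : Set D)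
    (hsym : ∀ i ∈ X, ∀ j ∈ X, M i j = M j i)
    (hnp : ¬ MatPure M X X)
    (hrow : ∀ i ∈ X, ¬ ((∃ j ∈ X, M i j = Entry.zero) ∧ (∃ j ∈ X, M i j = Entry.one)))
    (hrect : ∀ A B : Set D, A ⊆ X → B ⊆ X → MatPure M A B → MatPure M A A →
      MatPure M B B → Rectangular (H M A B)) :
    ∀ d ∈ X, M d d = Entry.zero ∨ M d d = Entry.one := by
  intro d hd
  by_contra hds
  push_neg at hds
  have hstar : M d d = Entry.star := by
    cases h : M d d
    · exact absurd h hds.1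
    · exact absurd h hds.2
    · rfl
  rw [MatPure] at hnp
  push_neg at hnp
  obtain ⟨⟨a0, ha0, b0, hb0, h0⟩, a1, ha1, b1, hb1, h1⟩ := hnp
  have noz : ∀ i ∈ X, (∃ j ∈ X, M i j = Entry.one) → ∀ j ∈ X, M i j ≠ Entry.zero := by
    intro i hi h1' j hj h0'
    exact hrow i hi ⟨⟨j, hj, h0'⟩, h1'⟩
  have noo : ∀ i ∈ X, (∃ j ∈ X, M i j = Entry.zero) → ∀ j ∈ X, M i j ≠ Entry.one := by
    intro i hi h0' j hj h1'
    exact hrow i hi ⟨h0', ⟨j, hj, h1'⟩⟩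
  have cross : ∀ i ∈ X, ∀ j ∈ X, (∃ k ∈ X, M i k = Entry.zero) →
      (∀ k ∈ X, M j k ≠ Entry.zero) → M i j = Entry.star := by
    intro i hi j hj hi0 hjz
    have hn1 : M i j ≠ Entry.one := noo i hi hi0 j hj
    have hn0 : M i j ≠ Entry.zero := by
      rw [hsym i hi j hj]; exact hjz i hi
    cases h : M i j
    · exact absurd h hn0
    · exact absurd h hn1
    · rfl
  by_cases hd0 : ∃ j ∈ X, M d j = Entry.zero
  · -- d's row has a zero; use the one-entry (a1, b1)
    have r1a : ∃ j ∈ X, M a1 j = Entry.one := ⟨b1, hb1, h1⟩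
    have r1b : ∃ j ∈ X, M b1 j = Entry.one :=
      ⟨a1, ha1, by rw [hsym b1 hb1 a1 ha1]; exact h1⟩
    have hna : ∀ k ∈ X, M a1 k ≠ Entry.zero := noz a1 ha1 r1a
    have hnb : ∀ k ∈ X, M b1 k ≠ Entry.zero := noz b1 hb1 r1b
    have sda : M d a1 = Entry.star := cross d hd a1 ha1 hd0 hna
    have sdb : M d b1 = Entry.star := cross d hd b1 hb1 hd0 hnb
    have sad : M a1 d = Entry.star := by rw [hsym a1 ha1 d hd]; exact sda
    have hAX : ({d, a1} : Set D) ⊆ X :=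
      Set.insert_subset_iff.mpr ⟨hd, Set.singleton_subset_iff.mpr ha1⟩
    have hBX : ({d, b1} : Set D) ⊆ X :=
      Set.insert_subset_iff.mpr ⟨hd, Set.singleton_subset_iff.mpr hb1⟩
    have hnaa : M a1 a1 ≠ Entry.zero := hna a1 ha1
    have hnbb : M b1 b1 ≠ Entry.zero := hnb b1 hb1
    have hnbd : M b1 d ≠ Entry.zero := hnb d hd
    have pAB : MatPure M {d, a1} {d, b1} := by
      left
      intro i hi j hj
      simp only [Set.mem_insert_iff, Set.mem_singleton_iff] at hi hj
      rcases hi with rfl | rfl <;> rcases hj with rfl | rfl <;>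
        simp [hstar, sda, sdb, sad, h1]
    have pAA : MatPure M {d, a1} {d, a1} := by
      left
      intro i hi j hj
      simp only [Set.mem_insert_iff, Set.mem_singleton_iff] at hi hj
      rcases hi with rfl | rfl <;> rcases hj with rfl | rfl <;>
        simp [hstar, sda, sad, hnaa]
    have pBB : MatPure M {d, b1} {d, b1} := by
      left
      intro i hi j hj
      simp only [Set.mem_insert_iff, Set.mem_singleton_iff] at hi hj
      rcases hi with rfl | rfl <;> rcases hj with rfl | rfl <;>
        simp [hstar, sdb, hnbb, hnbd]
    have hR := hrect {d, a1} {d, b1} hAX hBX pAB pAA pBB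
    have hdmem : d ∈ ({d, a1} : Set D) := Set.mem_insert _ _
    have hdmem' : d ∈ ({d, b1} : Set D) := Set.mem_insert _ _
    have hamem : a1 ∈ ({d, a1} : Set D) := Set.mem_insert_of_mem _ rfl
    have hbmem : b1 ∈ ({d, b1} : Set D) := Set.mem_insert_of_mem _ rfl
    obtain ⟨-, -, hst⟩ := hR d a1 d b1 ⟨hdmem, hdmem', hstar⟩ ⟨hdmem, hbmem, sdb⟩
      ⟨hamem, hdmem', sad⟩
    rw [h1] at hst
    exact absurd hst (by simp)
  · -- d's row has no zero; use the zero-entry (a0, b0)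
    push_neg at hd0
    have r0a : ∃ j ∈ X, M a0 j = Entry.zero := ⟨b0, hb0, h0⟩
    have r0b : ∃ j ∈ X, M b0 j = Entry.zero :=
      ⟨a0, ha0, by rw [hsym b0 hb0 a0 ha0]; exact h0⟩
    have sad : M a0 d = Entry.star := cross a0 ha0 d hd r0a hd0
    have sbd : M b0 d = Entry.star := cross b0 hb0 d hd r0b hd0
    have sda : M d a0 = Entry.star := by rw [hsym d hd a0 ha0]; exact sad
    have sdb : M d b0 = Entry.star := by rw [hsym d hd b0 hb0]; exact sbd
    have hna : ∀ k ∈ X, M a0 k ≠ Entry.one := noo a0 ha0 r0a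
    have hnb : ∀ k ∈ X, M b0 k ≠ Entry.one := noo b0 hb0 r0b
    have hAX : ({d, a0} : Set D) ⊆ X :=
      Set.insert_subset_iff.mpr ⟨hd, Set.singleton_subset_iff.mpr ha0⟩
    have hBX : ({d, b0} : Set D) ⊆ X :=
      Set.insert_subset_iff.mpr ⟨hd, Set.singleton_subset_iff.mpr hb0⟩
    have hnaa : M a0 a0 ≠ Entry.one := hna a0 ha0
    have hnbb : M b0 b0 ≠ Entry.one := hnb b0 hb0
    have pAB : MatPure M {d, a0} {d, b0} := by
      right
      intro i hi j hj
      simp only [Set.mem_insert_iff, Set.mem_singleton_iff] at hi hj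
      rcases hi with rfl | rfl <;> rcases hj with rfl | rfl <;>
        simp [hstar, sda, sdb, sad, h0]
    have pAA : MatPure M {d, a0} {d, a0} := by
      right
      intro i hi j hj
      simp only [Set.mem_insert_iff, Set.mem_singleton_iff] at hi hj
      rcases hi with rfl | rfl <;> rcases hj with rfl | rfl <;>
        simp [hstar, sda, sad, hnaa]
    have pBB : MatPure M {d, b0} {d, b0} := by
      right
      intro i hi j hj
      simp only [Set.mem_insert_iff, Set.mem_singleton_iff] at hi hj
      rcases hi with rfl | rfl <;> rcases hj with rfl | rfl <;>
        simp [hstar, sdb, sbd, hnbb]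
    have hR := hrect {d, a0} {d, b0} hAX hBX pAB pAA pBB
    have hdmem : d ∈ ({d, a0} : Set D) := Set.mem_insert _ _
    have hdmem' : d ∈ ({d, b0} : Set D) := Set.mem_insert _ _
    have hamem : a0 ∈ ({d, a0} : Set D) := Set.mem_insert_of_mem _ rfl
    have hbmem : b0 ∈ ({d, b0} : Set D) := Set.mem_insert_of_mem _ rfl
    obtain ⟨-, -, hst⟩ := hR d a0 d b0 ⟨hdmem, hdmem', hstar⟩ ⟨hdmem, hbmem, sdb⟩
      ⟨hamem, hdmem', sad⟩
    rw [h0] at hst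
    exact absurd hst (by simp)
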